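/- Let b, σ₀, γ, β > 0 and T ∈ ℝ. Define the constants A₁ = (b²/(4βσ₀²))·log(2√(1 + 4γσ₀²/b²) + 2 + 4γσ₀²/b²) + (γ/β)·log(b/(2σ₀²)) − (b²/(4βσ₀²))·√(1 + 4γσ₀²/b²) − γ/β + (γ/β)·log(√(1 + 4γσ₀²/b²) + 1), A₂ = b²/(4σ₀²), A₃ = −b²/(4βσ₀²), A₄ = b²/(4βσ₀²), A₅ = −γ/β, A₆ = γ/β − (γ/β)·log(b/(2σ₀²)), and the function C : ℝ → ℝ, C(t) = A₁·e^{β(t−T)} + A₂·(T−t)·e^{β(t−T)} + A₃·e^{β(t−T)}·log(2√(e^{2β(t−T)} + (4γσ₀²/b²)·e^{β(t−T)}) + 2e^{β(t−T)} + 4γσ₀²/b²) + A₄·e^{β(t−T)}·√(1 + (4γσ₀²/b²)·e^{−β(t−T)}) + A₅·log(√(1 + (4γσ₀²/b²)·e^{−β(t−T)}) + 1) + A₆. Then C(T) = 0, and C is differentiable on ℝ with, for every t, C′(t) − β·C(t) + (b²/(4σ₀²))·e^{β(t−T)} + γ/2 + (b/2)·√((b/(2σ₀²))²·e^{2β(t−T)}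 + (γ/σ₀²)·e^{β(t−T)}) − γ·log(√((b/(2σ₀²))² + (γ/σ₀²)·e^{−β(t−T)}) + b/(2σ₀²)) = 0. -/

import Mathlib

open Real

set_option maxHeartbeats 4000000

private lemma sqrt_fac {x : ℝ} (k : ℝ) (hx : 0 < x) :
    Real.sqrt (x ^ 2 + k * x) = x * Real.sqrt (1 + k * x⁻¹) := by
  have h : x ^ 2 + k * x = x ^ 2 * (1 + k * x⁻¹) := by field_simp
  rw [h, Real.sqrt_mul (by positivity), Real.sqrt_sq hx.le]

/-- The explicit function `C(t)` of the non-LQ mean-field control example. -/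
noncomputable def Cfun (b σ₀ γ β T : ℝ) : ℝ → ℝ := fun t =>
  -- A₁ · e^{β(t−T)}
  (b ^ 2 / (4 * β * σ₀ ^ 2) *
      Real.log (2 * Real.sqrt (1 + 4 * γ * σ₀ ^ 2 / b ^ 2) + 2 + 4 * γ * σ₀ ^ 2 / b ^ 2)
    + γ / β * Real.log (b / (2 * σ₀ ^ 2))
    - b ^ 2 / (4 * β * σ₀ ^ 2) * Real.sqrt (1 + 4 * γ * σ₀ ^ 2 / b ^ 2)
    - γ / β
    + γ / β * Real.log (Real.sqrt (1 + 4 * γ * σ₀ ^ 2 / b ^ 2) + 1)) * Real.exp (β * (t - T))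
  -- A₂ · (T−t) · e^{β(t−T)}
  + b ^ 2 / (4 * σ₀ ^ 2) * (T - t) * Real.exp (β * (t - T))
  -- A₃ · e^{β(t−T)} · log(2√(e^{2β(t−T)} + (4γσ₀²/b²)e^{β(t−T)}) + 2e^{β(t−T)} + 4γσ₀²/b²)
  + (-(b ^ 2 / (4 * β * σ₀ ^ 2))) * Real.exp (β * (t - T)) *
      Real.log (2 * Real.sqrt (Real.exp (2 * β * (t - T))
            + 4 * γ * σ₀ ^ 2 / b ^ 2 * Real.exp (β * (t - T)))
        + 2 * Real.exp (β * (t - T)) + 4 * γ * σ₀ ^ 2 / b ^ 2)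
  -- A₄ · e^{β(t−T)} · √(1 + (4γσ₀²/b²)e^{−β(t−T)})
  + b ^ 2 / (4 * β * σ₀ ^ 2) * Real.exp (β * (t - T)) *
      Real.sqrt (1 + 4 * γ * σ₀ ^ 2 / b ^ 2 * Real.exp (-(β * (t - T))))
  -- A₅ · log(√(1 + (4γσ₀²/b²)e^{−β(t−T)}) + 1)
  + (-(γ / β)) *
      Real.log (Real.sqrt (1 + 4 * γ * σ₀ ^ 2 / b ^ 2 * Real.exp (-(β * (t - T)))) + 1)
  -- A₆
  + (γ / β - γ / β * Real.log (b / (2 * σ₀ ^ 2)))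

private lemma cfun_deriv (b σ₀ γ β T : ℝ) (hb : 0 < b) (hσ : 0 < σ₀) (hγ : 0 < γ)
    (hβ : 0 < β) (t : ℝ) :
    HasDerivAt (Cfun b σ₀ γ β T)
      (β * (b ^ 2 / (4 * β * σ₀ ^ 2) *
          Real.log (2 * Real.sqrt (1 + 4 * γ * σ₀ ^ 2 / b ^ 2) + 2 + 4 * γ * σ₀ ^ 2 / b ^ 2)
        + γ / β * Real.log (b / (2 * σ₀ ^ 2))
        - b ^ 2 / (4 * β * σ₀ ^ 2) * Real.sqrt (1 + 4 * γ * σ₀ ^ 2 / b ^ 2)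
        - γ / β
        + γ / β * Real.log (Real.sqrt (1 + 4 * γ * σ₀ ^ 2 / b ^ 2) + 1)) * Real.exp (β * (t - T))
      + b ^ 2 / (4 * σ₀ ^ 2) * β * (T - t) * Real.exp (β * (t - T))
      - b ^ 2 / (4 * σ₀ ^ 2) * Real.exp (β * (t - T))
      - b ^ 2 / (4 * σ₀ ^ 2) * Real.exp (β * (t - T)) *
          Real.log (2 * (Real.exp (β * (t - T)) *
              Real.sqrt (1 + 4 * γ * σ₀ ^ 2 / b ^ 2 * Real.exp (-(β * (t - T)))))
            + 2 * Real.exp (β * (t - T)) + 4 * γ * σ₀ ^ 2 / b ^ 2)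
      - b ^ 2 / (4 * σ₀ ^ 2) * Real.exp (β * (t - T)) /
          Real.sqrt (1 + 4 * γ * σ₀ ^ 2 / b ^ 2 * Real.exp (-(β * (t - T))))
      + b ^ 2 / (4 * σ₀ ^ 2) * Real.exp (β * (t - T)) *
          Real.sqrt (1 + 4 * γ * σ₀ ^ 2 / b ^ 2 * Real.exp (-(β * (t - T))))
      - γ / (2 * Real.sqrt (1 + 4 * γ * σ₀ ^ 2 / b ^ 2 * Real.exp (-(β * (t - T)))))
      + γ * (4 * γ * σ₀ ^ 2 / b ^ 2) * Real.exp (-(β * (t - T))) /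
          (2 * Real.sqrt (1 + 4 * γ * σ₀ ^ 2 / b ^ 2 * Real.exp (-(β * (t - T)))) *
            (Real.sqrt (1 + 4 * γ * σ₀ ^ 2 / b ^ 2 * Real.exp (-(β * (t - T)))) + 1))) t := by
  have hE : 0 < Real.exp (β * (t - T)) := Real.exp_pos _
  have hF : 0 < Real.exp (-(β * (t - T))) := Real.exp_pos _
  have hk0 : 0 < 4 * γ * σ₀ ^ 2 / b ^ 2 := by positivity
  have hW0 : 0 < Real.exp (2 * β * (t - T))
      + 4 * γ * σ₀ ^ 2 / b ^ 2 * Real.exp (β * (t - T)) := by positivity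
  have hin0 : 0 < 1 + 4 * γ * σ₀ ^ 2 / b ^ 2 * Real.exp (-(β * (t - T))) := by positivity
  have hS0 : 0 < Real.sqrt (1 + 4 * γ * σ₀ ^ 2 / b ^ 2 * Real.exp (-(β * (t - T)))) :=
    Real.sqrt_pos.mpr hin0
  have hG0 : 0 < 2 * Real.sqrt (Real.exp (2 * β * (t - T))
        + 4 * γ * σ₀ ^ 2 / b ^ 2 * Real.exp (β * (t - T)))
      + 2 * Real.exp (β * (t - T)) + 4 * γ * σ₀ ^ 2 / b ^ 2 := by positivity
  have hS10 : 0 < Real.sqrt (1 + 4 * γ * σ₀ ^ 2 / b ^ 2 * Real.exp (-(β * (t - T)))) + 1 := by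
    linarith
  have hu : HasDerivAt (fun s : ℝ => β * (s - T)) β t := by
    simpa using ((hasDerivAt_id t).sub_const T).const_mul β
  have he := hu.exp
  have hu2 : HasDerivAt (fun s : ℝ => 2 * β * (s - T)) (2 * β) t := by
    simpa using ((hasDerivAt_id t).sub_const T).const_mul (2 * β)
  have he2 := hu2.exp
  have hfe := hu.neg.exp
  have hW := he2.add (he.const_mul (4 * γ * σ₀ ^ 2 / b ^ 2))
  have hsW := hW.sqrt hW0.ne'
  have hG := ((hsW.const_mul 2).add (he.const_mul 2)).add_const (4 * γ * σ₀ ^ 2 / b ^ 2)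
  have hlogG := hG.log hG0.ne'
  have h3 := (he.const_mul (-(b ^ 2 / (4 * β * σ₀ ^ 2)))).mul hlogG
  have hin := (hfe.const_mul (4 * γ * σ₀ ^ 2 / b ^ 2)).const_add 1
  have hS := hin.sqrt hin0.ne'
  have h4 := (he.const_mul (b ^ 2 / (4 * β * σ₀ ^ 2))).mul hS
  have h5 := ((hS.add_const 1).log hS10.ne').const_mul (-(γ / β))
  have h1 := he.const_mul (b ^ 2 / (4 * β * σ₀ ^ 2) *
      Real.log (2 * Real.sqrt (1 + 4 * γ * σ₀ ^ 2 / b ^ 2) + 2 + 4 * γ * σ₀ ^ 2 / b ^ 2)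
    + γ / β * Real.log (b / (2 * σ₀ ^ 2))
    - b ^ 2 / (4 * β * σ₀ ^ 2) * Real.sqrt (1 + 4 * γ * σ₀ ^ 2 / b ^ 2)
    - γ / β
    + γ / β * Real.log (Real.sqrt (1 + 4 * γ * σ₀ ^ 2 / b ^ 2) + 1))
  have h2 := (((hasDerivAt_const t T).sub (hasDerivAt_id t)).const_mul
      (b ^ 2 / (4 * σ₀ ^ 2))).mul he
  have H : HasDerivAt (Cfun b σ₀ γ β T) _ t :=
    ((((h1.add h2).add h3).add h4).add h5).add_const
      (γ / β - γ / β * Real.log (b / (2 * σ₀ ^ 2)))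
  convert H using 1
  simp only [id_eq, Pi.add_apply, Pi.sub_apply, Pi.neg_apply]
  rw [Real.exp_neg] at hin0 hS0 hS10 ⊢
  rw [show Real.exp (2 * β * (t - T)) = Real.exp (β * (t - T)) ^ 2 by
    rw [sq, ← Real.exp_add]; ring_nf]
  rw [sqrt_fac (4 * γ * σ₀ ^ 2 / b ^ 2) hE]
  have hGn : 0 < 2 * (Real.exp (β * (t - T)) *
      Real.sqrt (1 + 4 * γ * σ₀ ^ 2 / b ^ 2 * (Real.exp (β * (t - T)))⁻¹))
      + 2 * Real.exp (β * (t - T)) + 4 * γ * σ₀ ^ 2 / b ^ 2 := by positivity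
  field_simp
  ring

/-- For `b, σ₀, γ, β > 0` and `T ∈ ℝ`, the explicit function `C = Cfun`
satisfies `C(T) = 0`, is differentiable on `ℝ`, and for every `t`,
`C′(t) − βC(t) + (b²/(4σ₀²))e^{β(t−T)} + γ/2
 + (b/2)√((b/(2σ₀²))²e^{2β(t−T)} + (γ/σ₀²)e^{β(t−T)})
 − γ log(√((b/(2σ₀²))² + (γ/σ₀²)e^{−β(t−T)}) + b/(2σ₀²)) = 0`. -/

theorem stmt16 (b σ₀ γ β T : ℝ) (hb : 0 < b) (hσ : 0 < σ₀) (hγ : 0 < γ) (hβ : 0 < β) :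
    Cfun b σ₀ γ β T T = 0 ∧
    (∀ t : ℝ, DifferentiableAt ℝ (Cfun b σ₀ γ β T) t) ∧
    ∀ t : ℝ,
      deriv (Cfun b σ₀ γ β T) t - β * Cfun b σ₀ γ β T t
        + b ^ 2 / (4 * σ₀ ^ 2) * Real.exp (β * (t - T)) + γ / 2
        + b / 2 * Real.sqrt ((b / (2 * σ₀ ^ 2)) ^ 2 * Real.exp (2 * β * (t - T))
            + γ / σ₀ ^ 2 * Real.exp (β * (t - T)))
        - γ * Real.log (Real.sqrt ((b / (2 * σ₀ ^ 2)) ^ 2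
            + γ / σ₀ ^ 2 * Real.exp (-(β * (t - T)))) + b / (2 * σ₀ ^ 2)) = 0 := by
  refine ⟨?_, fun t => (cfun_deriv b σ₀ γ β T hb hσ hγ hβ t).differentiableAt, ?_⟩
  · simp [Cfun]
    ring
  intro t
  rw [(cfun_deriv b σ₀ γ β T hb hσ hγ hβ t).deriv]
  have hE : 0 < Real.exp (β * (t - T)) := Real.exp_pos _
  have hF : 0 < Real.exp (-(β * (t - T))) := Real.exp_pos _
  have hk0 : 0 < 4 * γ * σ₀ ^ 2 / b ^ 2 := by positivity
  have hin0 : 0 < 1 + 4 * γ * σ₀ ^ 2 / b ^ 2 * Real.exp (-(β * (t - T))) := by positivity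
  have h2e : Real.exp (2 * β * (t - T)) = Real.exp (β * (t - T)) ^ 2 := by
    rw [sq, ← Real.exp_add]; ring_nf
  have hEF : Real.exp (β * (t - T)) * Real.exp (-(β * (t - T))) = 1 := by
    rw [← Real.exp_add]; simp
  have hode1 : Real.sqrt ((b / (2 * σ₀ ^ 2)) ^ 2 * Real.exp (2 * β * (t - T))
      + γ / σ₀ ^ 2 * Real.exp (β * (t - T)))
      = b / (2 * σ₀ ^ 2) * (Real.exp (β * (t - T)) *
          Real.sqrt (1 + 4 * γ * σ₀ ^ 2 / b ^ 2 * Real.exp (-(β * (t - T))))) := by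
    rw [show (b / (2 * σ₀ ^ 2)) ^ 2 * Real.exp (2 * β * (t - T))
        + γ / σ₀ ^ 2 * Real.exp (β * (t - T))
        = (b / (2 * σ₀ ^ 2)) ^ 2 * (Real.exp (β * (t - T)) ^ 2
          + 4 * γ * σ₀ ^ 2 / b ^ 2 * Real.exp (β * (t - T))) by
      rw [h2e]; field_simp; ring]
    rw [Real.sqrt_mul (by positivity), Real.sqrt_sq (by positivity),
      sqrt_fac (4 * γ * σ₀ ^ 2 / b ^ 2) hE, ← Real.exp_neg]
  have hode2 : Real.sqrt ((b / (2 * σ₀ ^ 2)) ^ 2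
      + γ / σ₀ ^ 2 * Real.exp (-(β * (t - T))))
      = b / (2 * σ₀ ^ 2) *
          Real.sqrt (1 + 4 * γ * σ₀ ^ 2 / b ^ 2 * Real.exp (-(β * (t - T)))) := by
    rw [show (b / (2 * σ₀ ^ 2)) ^ 2 + γ / σ₀ ^ 2 * Real.exp (-(β * (t - T)))
        = (b / (2 * σ₀ ^ 2)) ^ 2 * (1 + 4 * γ * σ₀ ^ 2 / b ^ 2 * Real.exp (-(β * (t - T)))) by
      field_simp; ring]
    rw [Real.sqrt_mul (by positivity), Real.sqrt_sq (by positivity)]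
  have hlogm : Real.log (b / (2 * σ₀ ^ 2) *
        Real.sqrt (1 + 4 * γ * σ₀ ^ 2 / b ^ 2 * Real.exp (-(β * (t - T)))) + b / (2 * σ₀ ^ 2))
      = Real.log (b / (2 * σ₀ ^ 2))
        + Real.log (Real.sqrt (1 + 4 * γ * σ₀ ^ 2 / b ^ 2 * Real.exp (-(β * (t - T)))) + 1) := by
    rw [show b / (2 * σ₀ ^ 2) *
        Real.sqrt (1 + 4 * γ * σ₀ ^ 2 / b ^ 2 * Real.exp (-(β * (t - T)))) + b / (2 * σ₀ ^ 2)
        = b / (2 * σ₀ ^ 2) *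
          (Real.sqrt (1 + 4 * γ * σ₀ ^ 2 / b ^ 2 * Real.exp (-(β * (t - T)))) + 1) by ring,
      Real.log_mul (by positivity) (by positivity)]
  have hS2 : (Real.sqrt (1 + 4 * γ * σ₀ ^ 2 / b ^ 2 * Real.exp (-(β * (t - T))))) ^ 2
      = 1 + 4 * γ * σ₀ ^ 2 / b ^ 2 * Real.exp (-(β * (t - T))) := Real.sq_sqrt hin0.le
  have hS0 : 0 < Real.sqrt (1 + 4 * γ * σ₀ ^ 2 / b ^ 2 * Real.exp (-(β * (t - T)))) :=
    Real.sqrt_pos.mpr hin0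
  simp only [Cfun]
  rw [hode1, hode2, hlogm, h2e, sqrt_fac (4 * γ * σ₀ ^ 2 / b ^ 2) hE, ← Real.exp_neg]
  set S := Real.sqrt (1 + 4 * γ * σ₀ ^ 2 / b ^ 2 * Real.exp (-(β * (t - T)))) with hSdef
  have hSm1 : 0 < S ^ 2 - 1 := by
    have : 0 < 4 * γ * σ₀ ^ 2 / b ^ 2 * Real.exp (-(β * (t - T))) := by positivity
    rw [hS2]; linarith
  have hFval : Real.exp (-(β * (t - T))) = (S ^ 2 - 1) / (4 * γ * σ₀ ^ 2 / b ^ 2) := by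
    rw [eq_div_iff hk0.ne']
    linear_combination -hS2
  have hEval : Real.exp (β * (t - T)) = (4 * γ * σ₀ ^ 2 / b ^ 2) / (S ^ 2 - 1) := by
    rw [eq_div_iff hSm1.ne']
    linear_combination Real.exp (β * (t - T)) * hS2 + (4 * γ * σ₀ ^ 2 / b ^ 2) * hEF
  rw [hEval, hFval]
  have hS10 : (0:ℝ) < S + 1 := by linarith
  field_simp
  ring
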